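/- Let U ∈ ℝ^{n×m} and Φ ∈ ℝ^{s×m} be fixed with n ≥ 1, m ≥ 1. If for every E ∈ ℝ^{n×m} there exists Λ_E ∈ ℝ^{n×s} with U - Λ_E Φ = E, then Φ is left-invertible (there exists Φ⁻ with Φ⁻Φ = I_m). -/

import Mathlib

/-- If every utility matrix `E` can be implemented by some payment scheme `Λ`
(i.e. `U - Λ * Φ = E`), with `n ≥ 1` and `m ≥ 1`, then `Φ` is left-invertible. -/
theorem stmt_2 {n m s : ℕ} (hn : 1 ≤ n) (hm : 1 ≤ m)
    (U : Matrix (Fin n) (Fin m) ℝ)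
    (Φ : Matrix (Fin s) (Fin m) ℝ)
    (h : ∀ E : Matrix (Fin n) (Fin m) ℝ,
      ∃ Λ : Matrix (Fin n) (Fin s) ℝ, U - Λ * Φ = E) :
    ∃ Φinv : Matrix (Fin m) (Fin s) ℝ, Φinv * Φ = 1 := by
  have i0 : Fin n := ⟨0, hn⟩
  -- For each j, find Λ with Λ * Φ = matrix all of whose rows are e_j
  have key : ∀ j : Fin m, ∃ Λ : Matrix (Fin n) (Fin s) ℝ,
      Λ * Φ = Matrix.of fun _ k => if k = j then (1 : ℝ) else 0 := by
    intro j
    obtain ⟨Λ, hΛ⟩ := h (U - Matrix.of fun _ k => if k = j then (1 : ℝ) else 0)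
    refine ⟨Λ, ?_⟩
    have := sub_eq_sub_iff_sub_eq_sub.mp hΛ
    have := sub_eq_zero.mp (by simpa using this.symm)
    exact this
  choose Λf hΛf using key
  refine ⟨Matrix.of fun j t => Λf j i0 t, ?_⟩
  ext j k
  have := congrFun (congrFun (hΛf j) i0) k
  simp only [Matrix.mul_apply, Matrix.of_apply] at this ⊢
  rw [this, Matrix.one_apply]
  simp [eq_comm]
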